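/- Let x ∈ ℝⁿ be arbitrary (no sign assumption), x⁺ = max(x,0) and x⁻ = min(x,0) componentwise, M an m×n matrix, m ∈ ℝᵐ, ε ≥ 0. For any y ∈ ℝᵐ with (M - ε·𝟙)x⁺ + (M + ε·𝟙)x⁻ + (m - ε·𝟙) ≤ y ≤ (M + ε·𝟙)x⁺ + (M - ε·𝟙)x⁻ + (m + ε·𝟙), there exist W with |W_{ij} - M_{ij}| ≤ ε and b with |b_i - m_i| ≤ ε such that y = W x + b. -/
import Mathlib


theorem realizability_arbitrary_input
    {m n : ℕ} (M : Matrix (Fin m) (Fin n) ℝ) (mv : Fin m → ℝ) (ε : ℝ)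
    (hε : 0 ≤ ε)
    (x : Fin n → ℝ)
    (xpos xneg : Fin n → ℝ)
    (hpos : xpos = fun j => max (x j) 0)
    (hneg : xneg = fun j => min (x j) 0)
    (y : Fin m → ℝ)
    (hlo : (M - Matrix.of fun _ _ => ε).mulVec xpos +
             (M + Matrix.of fun _ _ => ε).mulVec xneg + (mv - fun _ => ε) ≤ y)
    (hhi : y ≤ (M + Matrix.of fun _ _ => ε).mulVec xpos +
             (M - Matrix.of fun _ _ => ε).mulVec xneg + (mv + fun _ => ε)) :
    ∃ (W : Matrix (Fin m) (Fin n) ℝ) (b : Fin m → ℝ),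
      (∀ i j, |W i j - M i j| ≤ ε) ∧ (∀ i, |b i - mv i| ≤ ε) ∧
      y = W.mulVec x + b := by
  subst hpos hneg
  set S : ℝ := ∑ j, |x j| with hS
  have hS0 : 0 ≤ S := Finset.sum_nonneg fun j _ => abs_nonneg _
  have hS1 : (0:ℝ) < S + 1 := by linarith
  set t : Fin m → ℝ := fun i => (y i - (M.mulVec x i + mv i)) / (S + 1) with ht
  set s : Fin n → ℝ := fun j => if 0 ≤ x j then 1 else -1 with hs
  have hsx : ∀ j, s j * x j = |x j| := by
    intro j
    simp only [hs]
    rcases le_or_gt 0 (x j) with h | h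
    · rw [if_pos h, one_mul, abs_of_nonneg h]
    · rw [if_neg (not_le.mpr h), abs_of_neg h]; ring
  have hsabs : ∀ j, |s j| = 1 := by
    intro j; simp only [hs]; split <;> simp
  -- expand the bounds
  have key : ∀ i, |y i - (M.mulVec x i + mv i)| ≤ ε * (S + 1) := by
    intro i
    have hlo' := hlo i
    have hhi' := hhi i
    have e1 : ∀ (c : ℝ) (v : Fin n → ℝ),
        (M + Matrix.of fun _ _ => c).mulVec v i = M.mulVec v i + c * ∑ j, v j := by
      intro c v
      simp [Matrix.mulVec, dotProduct, add_mul, Finset.sum_add_distrib, Finset.mul_sum]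
    have e2 : ∀ (c : ℝ) (v : Fin n → ℝ),
        (M - Matrix.of fun _ _ => c).mulVec v i = M.mulVec v i - c * ∑ j, v j := by
      intro c v
      simp [Matrix.mulVec, dotProduct, sub_mul, Finset.sum_sub_distrib, Finset.mul_sum]
    have hsum : (∑ j, max (x j) 0) - (∑ j, min (x j) 0) = S := by
      rw [hS, ← Finset.sum_sub_distrib]
      apply Finset.sum_congr rfl; intro j _
      rcases le_or_gt 0 (x j) with h | h
      · rw [max_eq_left h, min_eq_right h, abs_of_nonneg h]; ring
      · rw [max_eq_right h.le, min_eq_left h.le, abs_of_neg h]; ring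
    have hx : M.mulVec (fun j => max (x j) 0) i + M.mulVec (fun j => min (x j) 0) i
        = M.mulVec x i := by
      simp only [Matrix.mulVec, dotProduct, ← Finset.sum_add_distrib]
      apply Finset.sum_congr rfl; intro j _
      rw [← mul_add, max_add_min]; ring
    simp only [Pi.add_apply, Pi.sub_apply, Pi.le_def] at hlo' hhi' ⊢
    rw [e2, e1] at hlo'
    rw [e1, e2] at hhi'
    rw [abs_le]
    constructor <;> nlinarith [hlo', hhi', hsum, hx]
  have htbound : ∀ i, |t i| ≤ ε := by
    intro i
    rw [ht]
    rw [abs_div, abs_of_pos hS1, div_le_iff₀ hS1]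
    exact key i
  refine ⟨fun i j => M i j + t i * s j, fun i => mv i + t i, ?_, ?_, ?_⟩
  · intro i j
    have : |t i * s j| = |t i| := by rw [abs_mul, hsabs, mul_one]
    simpa [this] using htbound i
  · intro i; simpa using htbound i
  · funext i
    simp only [Matrix.mulVec, dotProduct, Pi.add_apply]
    have : ∑ j, (M i j + t i * s j) * x j
        = (∑ j, M i j * x j) + t i * S := by
      simp only [add_mul]
      rw [Finset.sum_add_distrib]
      congr 1
      rw [hS, Finset.mul_sum]
      apply Finset.sum_congr rfl; intro j _
      rw [mul_assoc, hsx]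
    rw [this]
    have : t i * (S + 1) = y i - (M.mulVec x i + mv i) := by
      rw [ht]; field_simp
    simp only [Matrix.mulVec, dotProduct] at this
    nlinarith [this]
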